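/- arXiv:0710.3773 — 3 statements merged into one kernel-verified Lean document; each statement's English description precedes it below -/
import Mathlib

section
/- Let f : ℕ → {0,1} satisfy f(0) = f(1) = 0 and f(s) = 1 for every even s ≥ 2. Then for every admissible path (m_n, m_{n+1}, m_{n+2}) of the chain (i.e. each consecutive pair is one of the transitions 0→1, 1→2, s→0 or s→s+1 for s ≥ 2), one has ( f(m_n) = 0 and f(m_{n+1}) = 0 and f(m_{n+2}) = 1 ) if and only if m_n = 0 (in which case necessarily m_{n+1} = 1 and m_{n+2} = 2). Consequently, for the Markov chain {M_i} with these transitions, almost surely the coded process X_i = f(M_i) shows the pattern (0,0,1) at positions (n, n+1, n+2) exactly when M_n = 0. -/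
open MeasureTheory

noncomputable section

/-- One-sided trajectories of the chain on `ℕ`. -/
abbrev NPath := ℕ → ℕ

/-- The allowed transitions of the chain: `0 → 1`, `1 → 2`, and `s → 0` or `s → s + 1`
for `s ≥ 2`. -/
def Step (s t : ℕ) : Prop :=
  (s = 0 ∧ t = 1) ∨ (s = 1 ∧ t = 2) ∨ (2 ≤ s ∧ (t = 0 ∨ t = s + 1))

/-- For a coding `f` with `f(0) = f(1) = 0` and `f(s) = 1` for even `s ≥ 2`, along any
admissible path the coded pattern `(0,0,1)` at three consecutive positions occurs exactly when
the chain is in state `0` at the first of these positions (in which case the next two states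
are necessarily `1` and `2`).  Consequently, for any process whose trajectories are almost
surely admissible, the coded process `X_i = f(M_i)` almost surely shows the pattern `(0,0,1)`
at `(n, n+1, n+2)` exactly when `M_n = 0`. -/
theorem pattern_001_iff_state_zero (f : ℕ → Bool)
    (h0 : f 0 = false) (h1 : f 1 = false)
    (heven : ∀ s, 2 ≤ s → Even s → f s = true) :
    (∀ m0 m1 m2 : ℕ, Step m0 m1 → Step m1 m2 →
      ((f m0 = false ∧ f m1 = false ∧ f m2 = true) ↔ m0 = 0) ∧
      (m0 = 0 → m1 = 1 ∧ m2 = 2)) ∧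
    (∀ μ : Measure NPath, (∀ᵐ ω ∂μ, ∀ i : ℕ, Step (ω i) (ω (i + 1))) →
      ∀ᵐ ω ∂μ, ∀ n : ℕ,
        ((f (ω n) = false ∧ f (ω (n + 1)) = false ∧ f (ω (n + 2)) = true) ↔ ω n = 0)) := by

  have key : ∀ m0 m1 m2 : ℕ, Step m0 m1 → Step m1 m2 →
      ((f m0 = false ∧ f m1 = false ∧ f m2 = true) ↔ m0 = 0) ∧
      (m0 = 0 → m1 = 1 ∧ m2 = 2) := by
    intro m0 m1 m2 hs1 hs2
    have hz : m0 = 0 → m1 = 1 ∧ m2 = 2 := by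
      intro h
      subst h
      have hm1 : m1 = 1 := by
        rcases hs1 with ⟨_, h⟩ | ⟨h, _⟩ | ⟨h, _⟩ <;> omega
      subst hm1
      refine ⟨rfl, ?_⟩
      rcases hs2 with ⟨h, _⟩ | ⟨_, h⟩ | ⟨h, _⟩ <;> omega
    refine ⟨⟨?_, ?_⟩, hz⟩
    · rintro ⟨hf0, hf1, hf2⟩
      by_contra hne
      rcases hs1 with ⟨h, _⟩ | ⟨ha, hb⟩ | ⟨ha, hb⟩
      · exact hne h
      · -- m0 = 1, m1 = 2
        rw [hb, heven 2 le_rfl (by decide)] at hf1; simp at hf1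
      · -- m0 ≥ 2
        have hodd : ¬ Even m0 := fun he => by
          rw [heven m0 ha he] at hf0; simp at hf0
        rcases hb with h2 | h2
        · -- m1 = 0, so m2 = 1
          subst h2
          have hm2 : m2 = 1 := by
            rcases hs2 with ⟨_, h⟩ | ⟨h, _⟩ | ⟨h, _⟩ <;> omega
          rw [hm2] at hf2; rw [h1] at hf2; simp at hf2
        · -- m1 = m0 + 1, even ≥ 3
          subst h2
          have : Even (m0 + 1) := Odd.add_one (Nat.not_even_iff_odd.mp hodd)
          rw [heven (m0 + 1) (by omega) this] at hf1
          simp at hf1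
    · intro h
      obtain ⟨e1, e2⟩ := hz h
      subst h; rw [e1, e2, h0, h1, heven 2 le_rfl (by decide)]
      exact ⟨rfl, rfl, rfl⟩
  refine ⟨key, ?_⟩
  intro μ hμ
  filter_upwards [hμ] with ω hω n
  exact (key (ω n) (ω (n + 1)) (ω (n + 2)) (hω n) (hω (n + 1))).1
end
end

section
/- Let k ≥ 1 and let f : {0,1,…,2k} → {0,1} satisfy f(0) = f(1) = 0 and f(s) = 1 for every even s with 2 ≤ s ≤ 2k. Then the map (m_0,…,m_t) ↦ (f(m_0),…,f(m_t)) is injective on the set of admissible paths (m_0,…,m_t) of the chain with m_0 = 0, m_t = 2k, and m_i ≠ 2k for all i < t. Consequently, on the event {M_0 = 0}, the random vector (M_0,…,M_{ψ_k}) is almost surely a measurable function of (f(M_0),…,f(M_{ψ_k})). -/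
open MeasureTheory

noncomputable section

lemma step_iff {s t : ℕ} : Step s t ↔ t = s + 1 ∨ (t = 0 ∧ 2 ≤ s) := by
  unfold Step; omega

lemma path_le (k t : ℕ) (m : ℕ → ℕ)
    (h0 : m 0 = 0) (hstep : ∀ i < t, Step (m i) (m (i + 1)))
    (hne : ∀ i < t, m i ≠ 2 * k) :
    ∀ i ≤ t, m i ≤ 2 * k := by
  intro i hi
  induction i with
  | zero => omega
  | succ n ih =>
    have hn : n < t := by omega
    have h := step_iff.mp (hstep n hn)
    have h2 := ih (le_of_lt hn)
    have h3 := hne n hn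
    omega

lemma diverge (k : ℕ) (hk : 1 ≤ k) (f : ℕ → Bool)
    (h0 : f 0 = false) (h1 : f 1 = false)
    (heven : ∀ s, 2 ≤ s → s ≤ 2 * k → Even s → f s = true)
    (t : ℕ) (m m' : ℕ → ℕ)
    (hs : ∀ i < t, Step (m i) (m (i + 1))) (hs' : ∀ i < t, Step (m' i) (m' (i + 1)))
    (hmt : m t = 2 * k) (hmt' : m' t = 2 * k)
    (hle : ∀ i ≤ t, m i ≤ 2 * k) (hle' : ∀ i ≤ t, m' i ≤ 2 * k)
    (hbits : ∀ i ≤ t, f (m i) = f (m' i))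
    (i : ℕ) (hit : i < t) (heq : m i = m' i)
    (hA : m (i + 1) = 0) (hB : m' (i + 1) = m' i + 1) : False := by
  set s := m' i with hsdef
  have hs2 : 2 ≤ s := by
    have := step_iff.mp (hs i hit); omega
  -- f (s+1) = false
  have hb1 : f (s + 1) = false := by
    have := hbits (i + 1) (by omega)
    rw [hA, hB, h0] at this; exact this.symm
  have hsle : s + 1 ≤ 2 * k := by
    have := hle' (i + 1) (by omega); omega
  -- s + 1 is odd
  have hodd : ¬ Even (s + 1) := by
    intro he
    have := heven (s + 1) (by omega) hsle he
    rw [this] at hb1; exact Bool.noConfusion hb1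
  have hseven : Even s := by
    rcases Nat.even_or_odd s with h | h
    · exact h
    · exact absurd (by simpa using h.add_one) hodd
  -- i + 1 < t since m' (i+1) = s+1 is odd ≠ 2k
  have hne2k : s + 1 ≠ 2 * k := by
    intro h; apply hodd; rw [h]; exact ⟨k, by ring⟩
  have hit1 : i + 1 < t := by
    rcases Nat.lt_or_ge (i + 1) t with h | h
    · exact h
    · exfalso; apply hne2k
      have : i + 1 = t := by omega
      rw [← hB, this, hmt']
  -- m (i+2) = 1
  have hm2 : m (i + 2) = 1 := by
    have h : m (i + 2) = m (i + 1) + 1 ∨ (m (i + 2) = 0 ∧ 2 ≤ m (i + 1)) :=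
      step_iff.mp (hs (i + 1) hit1)
    omega
  -- m' (i+2) = 0 or s+2
  have hm'2 : m' (i + 2) = 0 := by
    have h : m' (i + 2) = m' (i + 1) + 1 ∨ (m' (i + 2) = 0 ∧ 2 ≤ m' (i + 1)) :=
      step_iff.mp (hs' (i + 1) hit1)
    rcases h with h | h
    · exfalso
      have hev2 : Even (s + 2) := by
        rcases hseven with ⟨c, hc⟩; exact ⟨c + 1, by omega⟩
      have hle2 : s + 2 ≤ 2 * k := by
        have := hle' (i + 2) (by omega); omega
      have htrue := heven (s + 2) (by omega) hle2 hev2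
      have := hbits (i + 2) (by omega)
      rw [hm2, h1, h, hB, htrue] at this
      exact Bool.noConfusion this
    · omega
  have hit2 : i + 2 < t := by
    rcases Nat.lt_or_ge (i + 2) t with h | h
    · exact h
    · exfalso
      have : i + 2 = t := by omega
      rw [this, hmt] at hm2; omega
  have hm3 : m (i + 3) = 2 := by
    have h : m (i + 3) = m (i + 2) + 1 ∨ (m (i + 3) = 0 ∧ 2 ≤ m (i + 2)) :=
      step_iff.mp (hs (i + 2) hit2)
    omega
  have hm'3 : m' (i + 3) = 1 := by
    have h : m' (i + 3) = m' (i + 2) + 1 ∨ (m' (i + 3) = 0 ∧ 2 ≤ m' (i + 2)) :=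
      step_iff.mp (hs' (i + 2) hit2)
    omega
  have := hbits (i + 3) (by omega)
  rw [hm3, hm'3, h1, heven 2 le_rfl (by omega) ⟨1, rfl⟩] at this
  exact Bool.noConfusion this

/-- For `k ≥ 1` and a coding `f` with `f(0) = f(1) = 0` and `f(s) = 1` for even
`2 ≤ s ≤ 2k`, the map `(m_0, …, m_t) ↦ (f(m_0), …, f(m_t))` is injective on the set of
admissible paths starting at `0` and stopped at the first visit to `2k`.  Consequently
there is a (necessarily measurable, since the domain is countable) function `Φ` recovering
the path from its coded string. -/
theorem coded_path_injective (k : ℕ) (hk : 1 ≤ k) (f : ℕ → Bool)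
    (h0 : f 0 = false) (h1 : f 1 = false)
    (heven : ∀ s, 2 ≤ s → s ≤ 2 * k → Even s → f s = true) :
    (∀ (t t' : ℕ) (m m' : ℕ → ℕ),
      m 0 = 0 → (∀ i < t, Step (m i) (m (i + 1))) →
      m t = 2 * k → (∀ i < t, m i ≠ 2 * k) →
      m' 0 = 0 → (∀ i < t', Step (m' i) (m' (i + 1))) →
      m' t' = 2 * k → (∀ i < t', m' i ≠ 2 * k) →
      List.ofFn (fun i : Fin (t + 1) => f (m i)) =
        List.ofFn (fun i : Fin (t' + 1) => f (m' i)) →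
      t = t' ∧ ∀ i ≤ t, m i = m' i) ∧
    (∃ Φ : List Bool → List ℕ, ∀ (t : ℕ) (m : ℕ → ℕ),
      m 0 = 0 → (∀ i < t, Step (m i) (m (i + 1))) →
      m t = 2 * k → (∀ i < t, m i ≠ 2 * k) →
      Φ (List.ofFn (fun i : Fin (t + 1) => f (m i))) =
        List.ofFn (fun i : Fin (t + 1) => m i)) := by
  have hinj : ∀ (t t' : ℕ) (m m' : ℕ → ℕ),
      m 0 = 0 → (∀ i < t, Step (m i) (m (i + 1))) →
      m t = 2 * k → (∀ i < t, m i ≠ 2 * k) →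
      m' 0 = 0 → (∀ i < t', Step (m' i) (m' (i + 1))) →
      m' t' = 2 * k → (∀ i < t', m' i ≠ 2 * k) →
      List.ofFn (fun i : Fin (t + 1) => f (m i)) =
        List.ofFn (fun i : Fin (t' + 1) => f (m' i)) →
      t = t' ∧ ∀ i ≤ t, m i = m' i := by
    intro t t' m m' h0m hsm hmt hnem h0m' hsm' hmt' hnem' hcode
    have hlen : t + 1 = t' + 1 := by
      have := congrArg List.length hcode
      simpa using this
    have htt : t = t' := by omega
    subst htt
    refine ⟨rfl, ?_⟩
    have hfun := List.ofFn_inj.mp hcode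
    have hbits : ∀ i ≤ t, f (m i) = f (m' i) := by
      intro i hi
      exact congrFun hfun ⟨i, by omega⟩
    have hle := path_le k t m h0m hsm hnem
    have hle' := path_le k t m' h0m' hsm' hnem'
    intro i hi
    induction i with
    | zero => rw [h0m, h0m']
    | succ n ih =>
      have hn : n < t := by omega
      have heq := ih (le_of_lt hn)
      have c1 := step_iff.mp (hsm n hn)
      have c2 := step_iff.mp (hsm' n hn)
      rcases c1 with c1 | c1 <;> rcases c2 with c2 | c2
      · rw [c1, c2, heq]
      · exact (diverge k hk f h0 h1 heven t m' m hsm' hsm hmt' hmt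
          hle' hle (fun j hj => (hbits j hj).symm) n hn heq.symm c2.1 c1).elim
      · exact (diverge k hk f h0 h1 heven t m m' hsm hsm' hmt hmt'
          hle hle' hbits n hn heq c1.1 c2).elim
      · rw [c1.1, c2.1]
  refine ⟨hinj, ?_⟩
  classical
  set P : List Bool → List ℕ → Prop := fun b l =>
    ∃ t : ℕ, ∃ m : ℕ → ℕ, m 0 = 0 ∧ (∀ i < t, Step (m i) (m (i + 1))) ∧
      m t = 2 * k ∧ (∀ i < t, m i ≠ 2 * k) ∧
      b = List.ofFn (fun i : Fin (t + 1) => f (m i)) ∧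
      l = List.ofFn (fun i : Fin (t + 1) => m i) with hP
  refine ⟨fun b => if h : ∃ l, P b l then h.choose else [], ?_⟩
  intro t m h0m hsm hmt hnem
  have hex : ∃ l, P (List.ofFn (fun i : Fin (t + 1) => f (m i))) l :=
    ⟨_, t, m, h0m, hsm, hmt, hnem, rfl, rfl⟩
  beta_reduce
  rw [dif_pos hex]
  obtain ⟨t', m', c0, c1, c2, c3, c4, c5⟩ := hex.choose_spec
  obtain ⟨htt, hpt⟩ := hinj t t' m m' h0m hsm hmt hnem c0 c1 c2 c3 c4
  subst htt
  rw [c5]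
  congr 1
  funext i
  exact (hpt i (by omega)).symm
end
end

section
/- Let {M_i}_{i≥0} be the Markov chain on ℕ (transitions: 0→1 and 1→2 with probability 1; each s ≥ 2 goes to 0 or to s+1 with probability 1/2 each), let k ≥ 1, let f : ℕ → {0,1} satisfy f(0) = f(1) = 0 and f(s) = 1 for every even s ≥ 2, and set X_i = f(M_i) and ψ_k = min{ i ≥ 0 : M_i = 2k }. Then for every t, almost surely on the event { M_0 = 0, ψ_k = t }, the conditional probability P( X_{t+1} = 1 | X_0,…,X_t ) equals (1/2)·f(2k+1). -/
open MeasureTheory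

noncomputable section

/-- The Markov transition kernel on `ℕ`: from `0` to `1` with probability `1`, from `1` to `2`
with probability `1`, and from each `s ≥ 2` to `0` and to `s + 1` with probability `1/2` each. -/
def kerK (s t : ℕ) : ℝ :=
  if s = 0 then (if t = 1 then 1 else 0)
  else if s = 1 then (if t = 2 then 1 else 0)
  else if t = 0 ∨ t = s + 1 then 1 / 2 else 0

lemma kerK_nonneg (s u : ℕ) : 0 ≤ kerK s u := by
  unfold kerK; split_ifs <;> norm_num

lemma kerK_from_zero {u : ℕ} (h : kerK 0 u ≠ 0) : u = 1 := by
  unfold kerK at h; simp at h; by_contra hu; simp [hu] at h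

lemma kerK_from_one {u : ℕ} (h : kerK 1 u ≠ 0) : u = 2 := by
  unfold kerK at h; simp at h; by_contra hu; simp [hu] at h

lemma kerK_from_big {s u : ℕ} (hs : 2 ≤ s) (h : kerK s u ≠ 0) : u = 0 ∨ u = s + 1 := by
  have h0 : s ≠ 0 := by omega
  have h1 : s ≠ 1 := by omega
  unfold kerK at h; simp [h0, h1] at h
  by_contra hu; push_neg at hu; simp [hu.1, hu.2] at h

lemma kerK_into {s u : ℕ} (h : kerK s u ≠ 0) (hu : u ≠ 0) : u = s + 1 := by
  rcases Nat.lt_or_ge s 2 with hs | hs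
  · interval_cases s
    · rw [kerK_from_zero h]
    · rw [kerK_from_one h]
  · rcases kerK_from_big hs h with h' | h' <;> omega

/-- downward structure of a positive path from 0 hitting 2k at time t -/
lemma hit_structure {e : ℕ → ℕ} {t k : ℕ} (hk : 1 ≤ k)
    (hpos : ∀ i < t, kerK (e i) (e (i + 1)) ≠ 0)
    (h0 : e 0 = 0) (ht : e t = 2 * k) :
    2 * k ≤ t ∧ ∀ j ≤ 2 * k, e (t - 2 * k + j) = j := by
  have key : ∀ j ≤ 2 * k, j ≤ t ∧ e (t - j) = 2 * k - j := by
    intro j hj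
    induction j with
    | zero => simpa using ht
    | succ n ih =>
      obtain ⟨hnt, hen⟩ := ih (by omega)
      have hnt' : n < t := by
        by_contra hc
        have htn : t = n := by omega
        rw [htn, Nat.sub_self, h0] at hen; omega
      have hpos' := hpos (t - n - 1) (by omega)
      have harr : t - n - 1 + 1 = t - n := by omega
      rw [harr] at hpos'
      have hne : e (t - n) ≠ 0 := by rw [hen]; omega
      have := kerK_into hpos' hne
      constructor
      · omega
      · have : e (t - n - 1) = 2 * k - n - 1 := by omega
        have harr2 : t - (n + 1) = t - n - 1 := by omega
        rw [harr2, this]; omega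
  have h2k := key (2 * k) le_rfl
  refine ⟨h2k.1, fun j hj => ?_⟩
  obtain ⟨h1', h2'⟩ := key (2 * k - j) (by omega)
  have : t - (2 * k - j) = t - 2 * k + j := by omega
  rw [this] at h2'; rw [h2']; omega

/-- Core combinatorial lemma: any positive path with the same code as a hitting path
is at state 2k at time t. -/
lemma forced_state {a : ℕ → ℕ} {t k : ℕ} (hk : 1 ≤ k) (f : ℕ → Bool)
    (h0 : f 0 = false) (h1 : f 1 = false)
    (heven : ∀ s, 2 ≤ s → Even s → f s = true)
    (htk : 2 * k ≤ t)
    (hapos : ∀ i < t, kerK (a i) (a (i + 1)) ≠ 0)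
    (hacode : ∀ j ≤ 2 * k, f (a (t - 2 * k + j)) = f j) :
    a t = 2 * k := by
  set r := t - 2 * k with hr
  have hrt : r + 2 * k = t := by omega
  have hf2 : f 2 = true := heven 2 le_rfl (by decide)
  -- step 1 : a (r+1) = 1
  have step1 : a (r + 1) = 1 := by
    have k1 : kerK (a r) (a (r + 1)) ≠ 0 := hapos r (by omega)
    have k2 : kerK (a (r + 1)) (a (r + 2)) ≠ 0 := hapos (r + 1) (by omega)
    have c0 : f (a r) = false := by
      have := hacode 0 (by omega); simpa [h0] using this
    have c1 : f (a (r + 1)) = false := by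
      have := hacode 1 (by omega); simpa [h1] using this
    have c2 : f (a (r + 2)) = true := by
      have := hacode 2 (by omega); rwa [hf2] at this
    rcases Nat.lt_or_ge (a (r + 1)) 2 with hm | hm
    · interval_cases h : a (r + 1)
      · exfalso
        have h12 := kerK_from_zero k2
        rw [h12, h1] at c2; exact absurd c2 (by simp)
      · rfl
    · exfalso
      rcases Nat.even_or_odd (a (r + 1)) with hev | hodd
      · rw [heven _ hm hev] at c1; exact absurd c1 (by simp)
      · have hne : a (r + 1) ≠ 0 := by omega
        have := kerK_into k1 hne
        rcases hodd with ⟨m, hm'⟩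
        have hareven : Even (a r) := ⟨m, by omega⟩
        have har2 : 2 ≤ a r := by omega
        rw [heven _ har2 hareven] at c0; exact absurd c0 (by simp)
  -- step 2 : induction
  have step2 : ∀ j, 1 ≤ j → j ≤ 2 * k → a (r + j) = j := by
    intro j hj1 hj2
    induction j with
    | zero => omega
    | succ n ih =>
      rcases Nat.eq_or_lt_of_le hj1 with he | hlt
      · rw [← he]; simpa using step1
      · have hn1 : 1 ≤ n := by omega
        have hn2 : n ≤ 2 * k := by omega
        have ihn := ih hn1 (by omega)
        have kn : kerK (a (r + n)) (a (r + n + 1)) ≠ 0 := hapos (r + n) (by omega)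
        rw [ihn] at kn
        rcases Nat.eq_or_lt_of_le hn1 with h1n | h2n
        · subst h1n
          exact kerK_from_one kn
        · rcases kerK_from_big h2n kn with hz | hs
          · exfalso
            have hcn1 : f (a (r + (n + 1))) = f (n + 1) := hacode (n + 1) (by omega)
            rw [show r + (n+1) = r + n + 1 from by ring, hz, h0] at hcn1
            rcases Nat.even_or_odd (n + 1) with hev | hodd
            · rw [heven _ (by omega) hev] at hcn1; exact absurd hcn1 (by simp)
            · -- n+1 odd, so n+1 < 2k, position r+n+2 ≤ t
              have hlt2k : n + 1 < 2 * k := by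
                rcases Nat.eq_or_lt_of_le hj2 with he' | hl'
                · exfalso; rcases hodd with ⟨m, hm'⟩; omega
                · omega
              have kz : kerK (a (r + n + 1)) (a (r + n + 2)) ≠ 0 := hapos (r + n + 1) (by omega)
              rw [hz] at kz
              have h12 := kerK_from_zero kz
              have hcn2 : f (a (r + (n + 2))) = f (n + 2) := hacode (n + 2) (by omega)
              rw [show r + (n+2) = r + n + 2 from by ring, h12, h1] at hcn2
              have : Even (n + 2) := by rcases hodd with ⟨m, hm'⟩; exact ⟨m+1, by omega⟩
              rw [heven _ (by omega) this] at hcn2; exact absurd hcn2 (by simp)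
          · rw [show r + (n + 1) = r + n + 1 from by ring, hs]
  have := step2 (2 * k) (by omega) le_rfl
  rwa [hrt] at this

/-- cylinder set -/
def cyl (n : ℕ) (a : ℕ → ℕ) : Set NPath := {ω | ∀ i ≤ n, ω i = a i}

lemma measurableSet_cyl (n : ℕ) (a : ℕ → ℕ) : MeasurableSet (cyl n a) := by
  have : cyl n a = ⋂ (i : ℕ), ⋂ (_ : i ≤ n), {ω : NPath | ω i = a i} := by
    ext ω; simp [cyl]
  rw [this]
  refine MeasurableSet.iInter fun i => MeasurableSet.iInter fun _ => ?_
  have : {ω : NPath | ω i = a i} = (fun ω : NPath => ω i) ⁻¹' {a i} := rfl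
  rw [this]
  exact (measurable_pi_apply i) (MeasurableSet.singleton (a i))

/-- extension of a finite path by zeros -/
def ext (n : ℕ) (a : Fin (n + 1) → ℕ) : ℕ → ℕ := fun i => if h : i < n + 1 then a ⟨i, h⟩ else 0

lemma ext_eq {n : ℕ} (a : Fin (n + 1) → ℕ) {i : ℕ} (h : i ≤ n) :
    ext n a i = a ⟨i, by omega⟩ := by
  simp [ext, Nat.lt_succ_of_le h]

lemma ext_coe {n : ℕ} (a : Fin (n + 1) → ℕ) (i : Fin (n + 1)) : ext n a i = a i := by
  rw [ext_eq a (Nat.lt_succ_iff.mp i.isLt)]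

/-- partition of any measurable set by cylinders of length n -/
lemma measure_partition (μ : Measure NPath) (n : ℕ) {s : Set NPath} (hs : MeasurableSet s) :
    μ s = ∑' a : Fin (n + 1) → ℕ, μ (s ∩ cyl n (ext n a)) := by
  have hcov : s = ⋃ a : Fin (n + 1) → ℕ, s ∩ cyl n (ext n a) := by
    ext ω
    constructor
    · intro hω
      refine Set.mem_iUnion.mpr ⟨fun i => ω i, hω, fun i hi => ?_⟩
      rw [ext_eq _ hi]
    · intro hω
      rcases Set.mem_iUnion.mp hω with ⟨a, ha, -⟩
      exact ha
  have hdisj : Pairwise (Function.onFun Disjoint fun a : Fin (n + 1) → ℕ => s ∩ cyl n (ext n a)) := by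
    intro a b hab
    simp only [Function.onFun]
    rw [Set.disjoint_left]
    rintro ω ⟨-, hωa⟩ ⟨-, hωb⟩
    apply hab
    funext i
    have h1 := hωa i (Nat.lt_succ_iff.mp i.isLt)
    have h2 := hωb i (Nat.lt_succ_iff.mp i.isLt)
    rw [ext_coe] at h1 h2
    rw [← h1, ← h2]
  calc μ s = μ (⋃ a : Fin (n + 1) → ℕ, s ∩ cyl n (ext n a)) := by rw [← hcov]
    _ = _ := measure_iUnion hdisj (fun a => hs.inter (measurableSet_cyl n (ext n a)))

lemma cyl_eq (n : ℕ) (a : ℕ → ℕ) : {ω : NPath | ∀ i ≤ n, ω i = a i} = cyl n a := rfl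

lemma kerK_nonneg' (s u : ℕ) : 0 ≤ kerK s u := by
  unfold kerK; split_ifs <;> norm_num

lemma measure_A_inter_cyl (μ : Measure NPath) (ρ : ℕ → ℝ)
    (hcyl : ∀ (n : ℕ) (a : ℕ → ℕ),
      μ {ω | ∀ i ≤ n, ω i = a i} =
        ENNReal.ofReal (ρ (a 0) * ∏ i ∈ Finset.range n, kerK (a i) (a (i + 1))))
    (f : ℕ → Bool) (t : ℕ) (c : ℕ → ℕ) :
    μ ({ω : NPath | f (ω (t + 1)) = true} ∩ cyl t c)
      = μ (cyl t c) * ∑' s : ℕ, (if f s = true then ENNReal.ofReal (kerK (c t) s) else 0) := by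
  set A : Set NPath := {ω : NPath | f (ω (t + 1)) = true} with hA
  have hAmeas : MeasurableSet A := by
    have : A = (fun ω : NPath => ω (t + 1)) ⁻¹' (f ⁻¹' {true}) := rfl
    rw [this]
    exact (measurable_pi_apply (t + 1)) (Measurable.of_discrete (MeasurableSet.singleton true))
  -- snoc path
  set snoc : ℕ → ℕ → ℕ := fun s i => if i ≤ t then c i else s with hsnoc
  -- decompose by the value of ω (t+1)
  have hcov : A ∩ cyl t c = ⋃ s : ℕ, (A ∩ cyl t c ∩ {ω : NPath | ω (t + 1) = s}) := by
    ext ω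
    simp only [Set.mem_iUnion, Set.mem_inter_iff, Set.mem_setOf_eq]
    constructor
    · intro h; exact ⟨ω (t + 1), ⟨h, rfl⟩⟩
    · rintro ⟨s, ⟨h, -⟩⟩; exact h
  have hdisj : Pairwise (Function.onFun Disjoint fun s : ℕ => A ∩ cyl t c ∩ {ω : NPath | ω (t + 1) = s}) := by
    intro s1 s2 hss
    simp only [Function.onFun]
    rw [Set.disjoint_left]
    rintro ω ⟨-, h1⟩ ⟨-, h2⟩
    exact hss (h1 ▸ h2 ▸ rfl)
  have hmeas : ∀ s : ℕ, MeasurableSet (A ∩ cyl t c ∩ {ω : NPath | ω (t + 1) = s}) := by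
    intro s
    refine (hAmeas.inter (measurableSet_cyl t c)).inter ?_
    have : {ω : NPath | ω (t + 1) = s} = (fun ω : NPath => ω (t + 1)) ⁻¹' {s} := rfl
    rw [this]; exact (measurable_pi_apply (t + 1)) (MeasurableSet.singleton s)
  have hpiece : ∀ s : ℕ, A ∩ cyl t c ∩ {ω : NPath | ω (t + 1) = s}
      = if f s = true then cyl (t + 1) (snoc s) else ∅ := by
    intro s
    by_cases hfs : f s = true
    · rw [if_pos hfs]
      ext ω
      simp only [Set.mem_inter_iff, Set.mem_setOf_eq, hA, cyl, hsnoc]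
      constructor
      · rintro ⟨⟨-, hcy⟩, hts⟩ i hi
        rcases Nat.lt_or_ge i (t + 1) with h' | h'
        · have : i ≤ t := by omega
          simp only [if_pos this]; exact hcy i this
        · have hit : i = t + 1 := by omega
          subst hit
          simp only [if_neg (by omega : ¬ t + 1 ≤ t)]; exact hts
      · intro h
        have hts : ω (t + 1) = s := by
          have := h (t + 1) le_rfl
          simpa [if_neg (by omega : ¬ t + 1 ≤ t)] using this
        refine ⟨⟨by rw [hts]; exact hfs, fun i hi => ?_⟩, hts⟩
        have := h i (by omega)
        simpa [if_pos hi] using this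
    · rw [if_neg hfs]
      ext ω
      simp only [Set.mem_inter_iff, Set.mem_setOf_eq, hA, Set.mem_empty_iff_false, iff_false]
      rintro ⟨⟨hf1, -⟩, hts⟩
      rw [hts] at hf1; exact hfs hf1
  -- measure of each piece
  set P : ℝ := ρ (c 0) * ∏ i ∈ Finset.range t, kerK (c i) (c (i + 1)) with hP
  have hWc : μ (cyl t c) = ENNReal.ofReal P := hcyl t c
  have hpmeas : ∀ s : ℕ, μ (A ∩ cyl t c ∩ {ω : NPath | ω (t + 1) = s})
      = μ (cyl t c) * (if f s = true then ENNReal.ofReal (kerK (c t) s) else 0) := by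
    intro s
    rw [hpiece s]
    by_cases hfs : f s = true
    · rw [if_pos hfs, if_pos hfs]
      have hμ : μ (cyl (t + 1) (snoc s)) = ENNReal.ofReal (P * kerK (c t) s) := by
        have := hcyl (t + 1) (snoc s)
        rw [cyl_eq] at this
        rw [this]
        congr 1
        have h0 : snoc s 0 = c 0 := by simp [hsnoc]
        have hprod : ∏ i ∈ Finset.range (t + 1), kerK (snoc s i) (snoc s (i + 1))
            = (∏ i ∈ Finset.range t, kerK (c i) (c (i + 1))) * kerK (c t) s := by
          rw [Finset.prod_range_succ]
          congr 1
          · apply Finset.prod_congr rfl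
            intro i hi
            have hi' : i < t := Finset.mem_range.mp hi
            simp only [hsnoc]
            rw [if_pos (by omega : i ≤ t), if_pos (by omega : i + 1 ≤ t)]
          · simp only [hsnoc]
            rw [if_pos (le_refl t), if_neg (by omega : ¬ t + 1 ≤ t)]
        rw [h0, hprod, hP]; ring
      rw [hμ, hWc, ← ENNReal.ofReal_mul' (kerK_nonneg' (c t) s)]
    · rw [if_neg hfs, if_neg hfs, mul_zero, measure_empty]
  calc μ (A ∩ cyl t c) = μ (⋃ s : ℕ, (A ∩ cyl t c ∩ {ω : NPath | ω (t + 1) = s})) := by rw [← hcov]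
    _ = ∑' s : ℕ, μ (A ∩ cyl t c ∩ {ω : NPath | ω (t + 1) = s}) := measure_iUnion hdisj hmeas
    _ = ∑' s : ℕ, μ (cyl t c) * (if f s = true then ENNReal.ofReal (kerK (c t) s) else 0) := by
        exact tsum_congr hpmeas
    _ = _ := ENNReal.tsum_mul_left

lemma Q_two_k (f : ℕ → Bool) (k : ℕ) (hk : 1 ≤ k) (h0 : f 0 = false) :
    (∑' s : ℕ, (if f s = true then ENNReal.ofReal (kerK (2 * k) s) else 0))
      = ENNReal.ofReal ((1 / 2 : ℝ) * ((f (2 * k + 1)).toNat : ℝ)) := by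
  rw [tsum_eq_single (2 * k + 1) ?_]
  · by_cases hf : f (2 * k + 1) = true
    · rw [if_pos hf, hf]
      have : kerK (2 * k) (2 * k + 1) = 1 / 2 := by
        unfold kerK
        rw [if_neg (by omega : ¬ 2 * k = 0), if_neg (by omega : ¬ 2 * k = 1),
          if_pos (Or.inr rfl)]
      rw [this]; norm_num
    · rw [if_neg hf]
      rw [Bool.not_eq_true] at hf
      rw [hf]; norm_num
  · intro s hs
    by_cases hfs : f s = true
    · rw [if_pos hfs]
      have : kerK (2 * k) s = 0 := by
        have hs0 : s ≠ 0 := by rintro rfl; rw [h0] at hfs; exact absurd hfs (by simp)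
        unfold kerK
        rw [if_neg (by omega : ¬ 2 * k = 0), if_neg (by omega : ¬ 2 * k = 1),
          if_neg (by push_neg; exact ⟨hs0, hs⟩)]
      rw [this]; simp
    · rw [if_neg hfs]

lemma pos_of_cyl_ne_zero (μ : Measure NPath) (ρ : ℕ → ℝ)
    (hcyl : ∀ (n : ℕ) (a : ℕ → ℕ),
      μ {ω | ∀ i ≤ n, ω i = a i} =
        ENNReal.ofReal (ρ (a 0) * ∏ i ∈ Finset.range n, kerK (a i) (a (i + 1))))
    (t : ℕ) (c : ℕ → ℕ) (h : μ (cyl t c) ≠ 0) :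
    ∀ i < t, kerK (c i) (c (i + 1)) ≠ 0 := by
  intro i hi hzero
  apply h
  have : μ (cyl t c) = ENNReal.ofReal (ρ (c 0) * ∏ i ∈ Finset.range t, kerK (c i) (c (i + 1))) :=
    hcyl t c
  rw [this, Finset.prod_eq_zero (Finset.mem_range.mpr hi) hzero, mul_zero, ENNReal.ofReal_zero]

lemma atom_identity (μ : Measure NPath) (ρ : ℕ → ℝ)
    (hcyl : ∀ (n : ℕ) (a : ℕ → ℕ),
      μ {ω | ∀ i ≤ n, ω i = a i} =
        ENNReal.ofReal (ρ (a 0) * ∏ i ∈ Finset.range n, kerK (a i) (a (i + 1))))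
    (k : ℕ) (hk : 1 ≤ k) (f : ℕ → Bool)
    (h0 : f 0 = false) (h1 : f 1 = false)
    (heven : ∀ s, 2 ≤ s → Even s → f s = true)
    (t : ℕ) (v : Fin (t + 1) → Bool)
    (hEmeas : MeasurableSet {ω : NPath | ω 0 = 0 ∧ ω t = 2 * k ∧ ∀ i < t, ω i ≠ 2 * k})
    (hCvmeas : MeasurableSet ((fun ω : NPath => fun i : Fin (t + 1) => f (ω i)) ⁻¹' {v}))
    (hAmeas : MeasurableSet {ω : NPath | f (ω (t + 1)) = true})
    (hv : μ ({ω : NPath | ω 0 = 0 ∧ ω t = 2 * k ∧ ∀ i < t, ω i ≠ 2 * k}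
          ∩ ((fun ω : NPath => fun i : Fin (t + 1) => f (ω i)) ⁻¹' {v})) ≠ 0) :
    μ ({ω : NPath | f (ω (t + 1)) = true}
          ∩ ((fun ω : NPath => fun i : Fin (t + 1) => f (ω i)) ⁻¹' {v}))
      = ENNReal.ofReal ((1 / 2 : ℝ) * ((f (2 * k + 1)).toNat : ℝ))
          * μ ((fun ω : NPath => fun i : Fin (t + 1) => f (ω i)) ⁻¹' {v}) := by
  set E : Set NPath := {ω : NPath | ω 0 = 0 ∧ ω t = 2 * k ∧ ∀ i < t, ω i ≠ 2 * k} with hE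
  set Cv : Set NPath := (fun ω : NPath => fun i : Fin (t + 1) => f (ω i)) ⁻¹' {v} with hCv
  set A : Set NPath := {ω : NPath | f (ω (t + 1)) = true} with hA
  have hmemCv : ∀ ω : NPath, ω ∈ Cv ↔ ∀ i : Fin (t + 1), f (ω i) = v i := by
    intro ω
    rw [hCv, Set.mem_preimage, Set.mem_singleton_iff, funext_iff]
  -- extract a witness path
  rw [measure_partition μ t (hEmeas.inter hCvmeas)] at hv
  have hex : ∃ a0 : Fin (t + 1) → ℕ, μ (E ∩ Cv ∩ cyl t (ext t a0)) ≠ 0 := by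
    by_contra hc
    push_neg at hc
    apply hv
    simp [hc]
  obtain ⟨a0, ha0⟩ := hex
  set e : ℕ → ℕ := ext t a0 with he_def
  have hW0 : μ (cyl t e) ≠ 0 := fun hz =>
    ha0 (measure_mono_null Set.inter_subset_right hz)
  have hepos : ∀ i < t, kerK (e i) (e (i + 1)) ≠ 0 := pos_of_cyl_ne_zero μ ρ hcyl t e hW0
  obtain ⟨ω0, hω0⟩ := nonempty_of_measure_ne_zero ha0
  obtain ⟨⟨hω0E, hω0Cv⟩, hω0cyl⟩ := hω0
  have hωe : ∀ i ≤ t, ω0 i = e i := hω0cyl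
  have he0 : e 0 = 0 := by rw [← hωe 0 (by omega)]; exact hω0E.1
  have het : e t = 2 * k := by rw [← hωe t le_rfl]; exact hω0E.2.1
  obtain ⟨htk, hestr⟩ := hit_structure hk hepos he0 het
  have hecode : ∀ i, ∀ hi : i ≤ t, f (e i) = v ⟨i, by omega⟩ := by
    intro i hi
    rw [← hωe i hi]
    exact (hmemCv ω0).mp hω0Cv ⟨i, by omega⟩
  -- the constant
  set c' : ENNReal := ENNReal.ofReal ((1 / 2 : ℝ) * ((f (2 * k + 1)).toNat : ℝ)) with hc'
  -- per-cylinder identity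
  have hper : ∀ a : Fin (t + 1) → ℕ,
      μ (A ∩ Cv ∩ cyl t (ext t a)) = c' * μ (Cv ∩ cyl t (ext t a)) := by
    intro a
    by_cases hcode : ∀ i : Fin (t + 1), f (a i) = v i
    · have hsub : cyl t (ext t a) ⊆ Cv := by
        intro ω hω
        rw [hmemCv]
        intro i
        rw [hω i (Nat.lt_succ_iff.mp i.isLt), ext_coe]
        exact hcode i
      have hCvcyl : Cv ∩ cyl t (ext t a) = cyl t (ext t a) :=
        Set.inter_eq_self_of_subset_right hsub
      have hACvcyl : A ∩ Cv ∩ cyl t (ext t a) = A ∩ cyl t (ext t a) := by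
        rw [Set.inter_assoc, hCvcyl]
      rw [hACvcyl, hCvcyl, measure_A_inter_cyl μ ρ hcyl f t (ext t a)]
      by_cases hWa : μ (cyl t (ext t a)) = 0
      · rw [hWa, zero_mul, mul_zero]
      · -- forced state
        have hapos := pos_of_cyl_ne_zero μ ρ hcyl t (ext t a) hWa
        have hacode : ∀ j ≤ 2 * k, f (ext t a (t - 2 * k + j)) = f j := by
          intro j hj
          have hij : t - 2 * k + j ≤ t := by omega
          rw [ext_eq a hij]
          have h1' : f (a ⟨t - 2 * k + j, by omega⟩) = v ⟨t - 2 * k + j, by omega⟩ :=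
            hcode ⟨t - 2 * k + j, by omega⟩
          rw [h1', ← hecode _ hij, hestr j hj]
        have hat : ext t a t = 2 * k :=
          forced_state hk f h0 h1 heven htk hapos hacode
        rw [hat, Q_two_k f k hk h0, ← hc', mul_comm]
    · push_neg at hcode
      obtain ⟨i0, hi0⟩ := hcode
      have hempty : Cv ∩ cyl t (ext t a) = ∅ := by
        ext ω
        simp only [Set.mem_inter_iff, Set.mem_empty_iff_false, iff_false]
        rintro ⟨hωCv, hωcyl⟩
        apply hi0
        rw [← ext_coe a i0, ← hωcyl i0 (Nat.lt_succ_iff.mp i0.isLt)]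
        exact (hmemCv ω).mp hωCv i0
      have hempty2 : A ∩ Cv ∩ cyl t (ext t a) = ∅ := by
        rw [Set.inter_assoc, hempty, Set.inter_empty]
      rw [hempty, hempty2, measure_empty, mul_zero]
  calc μ (A ∩ Cv) = ∑' a : Fin (t + 1) → ℕ, μ (A ∩ Cv ∩ cyl t (ext t a)) :=
        measure_partition μ t (hAmeas.inter hCvmeas)
    _ = ∑' a : Fin (t + 1) → ℕ, c' * μ (Cv ∩ cyl t (ext t a)) := tsum_congr hper
    _ = c' * ∑' a : Fin (t + 1) → ℕ, μ (Cv ∩ cyl t (ext t a)) := ENNReal.tsum_mul_left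
    _ = c' * μ Cv := by rw [← measure_partition μ t hCvmeas]

/-- Let `{M_i}_{i≥0}` be the Markov chain with kernel `K` and some initial distribution `ρ`
(characterized by the cylinder probabilities), `k ≥ 1`, and let `f : ℕ → {0,1}` satisfy
`f(0) = f(1) = 0` and `f(s) = 1` for every even `s ≥ 2`; set `X_i = f(M_i)`.  Then for every
`t`, almost surely on the event `{M_0 = 0, ψ_k = t}` (i.e. `M_0 = 0`, `M_t = 2k`, and
`M_i ≠ 2k` for `i < t`), the conditional probability `P(X_{t+1} = 1 | X_0, …, X_t)` equals
`(1/2)·f(2k+1)`. -/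
theorem cond_prob_at_hitting_time (μ : Measure NPath) [IsProbabilityMeasure μ]
    (ρ : ℕ → ℝ)
    (hcyl : ∀ (n : ℕ) (a : ℕ → ℕ),
      μ {ω | ∀ i ≤ n, ω i = a i} =
        ENNReal.ofReal (ρ (a 0) * ∏ i ∈ Finset.range n, kerK (a i) (a (i + 1))))
    (k : ℕ) (hk : 1 ≤ k) (f : ℕ → Bool)
    (h0 : f 0 = false) (h1 : f 1 = false)
    (heven : ∀ s, 2 ≤ s → Even s → f s = true)
    (t : ℕ) :
    ∀ᵐ ω ∂μ, (ω 0 = 0 ∧ ω t = 2 * k ∧ ∀ i < t, ω i ≠ 2 * k) →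
      (μ[Set.indicator {ω' : NPath | f (ω' (t + 1)) = true} (fun _ => (1 : ℝ)) |
          MeasurableSpace.comap (fun ω' : NPath => fun i : Fin (t + 1) => f (ω' i))
            MeasurableSpace.pi]) ω
        = (1 / 2 : ℝ) * ((f (2 * k + 1)).toNat : ℝ) := by
  set c : ℝ := (1 / 2 : ℝ) * ((f (2 * k + 1)).toNat : ℝ) with hc
  set g : NPath → (Fin (t + 1) → Bool) := fun ω' : NPath => fun i : Fin (t + 1) => f (ω' i)
    with hg
  set A : Set NPath := {ω' : NPath | f (ω' (t + 1)) = true} with hA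
  set E : Set NPath := {ω : NPath | ω 0 = 0 ∧ ω t = 2 * k ∧ ∀ i < t, ω i ≠ 2 * k} with hE
  set F : NPath → ℝ := Set.indicator A (fun _ => (1 : ℝ)) with hF
  -- measurability
  have hgmeas : Measurable g := by
    apply measurable_pi_lambda
    intro i
    exact Measurable.of_discrete.comp (measurable_pi_apply (i : ℕ))
  have hm : MeasurableSpace.comap g MeasurableSpace.pi ≤ MeasurableSpace.pi := hgmeas.comap_le
  have hAmeas : MeasurableSet A := by
    have : A = (fun ω : NPath => ω (t + 1)) ⁻¹' (f ⁻¹' {true}) := rfl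
    rw [this]
    exact (measurable_pi_apply (t + 1)) (Measurable.of_discrete (MeasurableSet.singleton true))
  have hEmeas : MeasurableSet E := by
    have : E = ((fun ω : NPath => ω 0) ⁻¹' {0}) ∩ (((fun ω : NPath => ω t) ⁻¹' {2 * k}) ∩
        ⋂ (i : ℕ), ⋂ (_ : i < t), ((fun ω : NPath => ω i) ⁻¹' {2 * k})ᶜ) := by
      ext ω; simp [hE, and_assoc]
    rw [this]
    exact ((measurable_pi_apply 0) (MeasurableSet.singleton 0)).inter
      (((measurable_pi_apply t) (MeasurableSet.singleton (2 * k))).inter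
        (MeasurableSet.iInter fun i => MeasurableSet.iInter fun _ =>
          ((measurable_pi_apply i) (MeasurableSet.singleton (2 * k))).compl))
  have hCvmeas : ∀ v : Fin (t + 1) → Bool, MeasurableSet (g ⁻¹' {v}) := fun v =>
    hgmeas (MeasurableSet.singleton v)
  -- the candidate conditional expectation
  set R : (Fin (t + 1) → Bool) → ℝ := fun v => (μ (A ∩ g ⁻¹' {v}) / μ (g ⁻¹' {v})).toReal
    with hR
  set h : NPath → ℝ := fun ω => R (g ω) with hh
  have hhG : Measurable[MeasurableSpace.comap g MeasurableSpace.pi] h :=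
    (measurable_of_countable R).comp (Measurable.of_comap_le le_rfl)
  have hhm0 : Measurable h := hhG.mono hm le_rfl
  have hRle : ∀ v, |R v| ≤ 1 := by
    intro v
    rw [abs_of_nonneg ENNReal.toReal_nonneg]
    have hle : μ (A ∩ g ⁻¹' {v}) / μ (g ⁻¹' {v}) ≤ 1 :=
      ENNReal.div_le_of_le_mul (by rw [one_mul]; exact measure_mono Set.inter_subset_right)
    calc (μ (A ∩ g ⁻¹' {v}) / μ (g ⁻¹' {v})).toReal ≤ (1 : ENNReal).toReal :=
          ENNReal.toReal_mono (by simp) hle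
      _ = 1 := by simp
  have hint : Integrable h μ := by
    refine ⟨hhm0.aestronglyMeasurable, HasFiniteIntegral.of_bounded (C := 1) ?_⟩
    exact ae_of_all μ fun ω => hRle (g ω)
  have hFint : Integrable F μ := (integrable_const (1 : ℝ)).indicator hAmeas
  -- set integral equality
  have hseteq : ∀ s : Set NPath, MeasurableSet[MeasurableSpace.comap g MeasurableSpace.pi] s →
      μ s < ⊤ → ∫ x in s, h x ∂μ = ∫ x in s, F x ∂μ := by
    intro s hs _
    obtain ⟨S, -, rfl⟩ := MeasurableSpace.measurableSet_comap.mp hs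
    have hSfin : S.Finite := Set.toFinite S
    have hcup : g ⁻¹' S = ⋃ v ∈ hSfin.toFinset, g ⁻¹' {v} := by
      ext ω
      simp [Set.Finite.mem_toFinset]
    have hdisj : Set.Pairwise ↑hSfin.toFinset (Function.onFun Disjoint fun v => g ⁻¹' {v}) := by
      intro v1 _ v2 _ hv12
      simp only [Function.onFun]
      rw [Set.disjoint_left]
      rintro ω h1' h2'
      exact hv12 (by rw [← h1', ← h2'])
    have hpervh : ∀ v : Fin (t + 1) → Bool,
        ∫ x in g ⁻¹' {v}, h x ∂μ = (μ (g ⁻¹' {v})).toReal * R v := by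
      intro v
      have heq1 : ∀ x ∈ g ⁻¹' {v}, h x = R v := by
        intro x hx
        simp only [Set.mem_preimage, Set.mem_singleton_iff] at hx
        simp only [hh, hx]
      rw [setIntegral_congr_fun (hCvmeas v) heq1, setIntegral_const, smul_eq_mul]; rfl
    have hpervF : ∀ v : Fin (t + 1) → Bool,
        ∫ x in g ⁻¹' {v}, F x ∂μ = (μ (A ∩ g ⁻¹' {v})).toReal := by
      intro v
      rw [hF, setIntegral_indicator hAmeas, setIntegral_const, smul_eq_mul, mul_one,
        Set.inter_comm]; rfl
    have hperveq : ∀ v : Fin (t + 1) → Bool,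
        (μ (g ⁻¹' {v})).toReal * R v = (μ (A ∩ g ⁻¹' {v})).toReal := by
      intro v
      by_cases hvz : μ (g ⁻¹' {v}) = 0
      · rw [hvz, measure_mono_null Set.inter_subset_right hvz]
        simp [hR]
      · rw [hR]
        simp only
        rw [← ENNReal.toReal_mul, ENNReal.mul_div_cancel hvz (measure_ne_top μ _)]
    rw [hcup, integral_biUnion_finset hSfin.toFinset (fun v _ => hCvmeas v) hdisj
        (fun v _ => hint.integrableOn),
      integral_biUnion_finset hSfin.toFinset (fun v _ => hCvmeas v) hdisj
        (fun v _ => hFint.integrableOn)]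
    exact Finset.sum_congr rfl fun v _ => by rw [hpervh v, hpervF v, hperveq v]
  -- conditional expectation identification
  haveI : IsFiniteMeasure (μ.trim hm) := isFiniteMeasure_trim hm
  have hcond : h =ᵐ[μ] μ[F | MeasurableSpace.comap g MeasurableSpace.pi] :=
    ae_eq_condExp_of_forall_setIntegral_eq hm hFint (fun s _ _ => hint.integrableOn)
      hseteq (StronglyMeasurable.aestronglyMeasurable hhG.stronglyMeasurable)
  -- bad atoms are null
  have hbad : ∀ v : Fin (t + 1) → Bool, R v ≠ c → μ (E ∩ g ⁻¹' {v}) = 0 := by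
    intro v hRv
    by_contra hne
    apply hRv
    have hid := atom_identity μ ρ hcyl k hk f h0 h1 heven t v hEmeas (hCvmeas v) hAmeas hne
    have hCvne : μ (g ⁻¹' {v}) ≠ 0 := fun hz =>
      hne (measure_mono_null Set.inter_subset_right hz)
    rw [hR]
    simp only
    rw [hid, mul_div_assoc, ENNReal.div_self hCvne (measure_ne_top μ _), mul_one,
      ENNReal.toReal_ofReal]
    positivity
  set N : Set NPath := {ω : NPath | ω ∈ E ∧ R (g ω) ≠ c} with hN
  have hNnull : μ N = 0 := by
    have hsub : N ⊆ ⋃ v : Fin (t + 1) → Bool,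
        (if R v = c then (∅ : Set NPath) else E ∩ g ⁻¹' {v}) := by
      rintro ω ⟨hωE, hωR⟩
      refine Set.mem_iUnion.mpr ⟨g ω, ?_⟩
      rw [if_neg hωR]
      exact ⟨hωE, rfl⟩
    refine measure_mono_null hsub (measure_iUnion_null fun v => ?_)
    by_cases hRv : R v = c
    · rw [if_pos hRv]; exact measure_empty
    · rw [if_neg hRv]; exact hbad v hRv
  have hNae : ∀ᵐ ω ∂μ, ω ∉ N := measure_eq_zero_iff_ae_notMem.mp hNnull
  filter_upwards [hcond, hNae] with ω hωcond hωN hωE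
  rw [← hωcond]
  by_contra hne
  exact hωN ⟨hωE, hne⟩
end
end
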